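/- arXiv:1109.4762 — 2 statements merged into one kernel-verified Lean document; each statement's English description precedes it below -/
import Mathlib

section
/- Fix an integer c ≥ 2, a real ε with 0 < ε < 1, and a positive real constant κ. For each n, let S_n be the set of pairs (a,b) with a < b, a+b = c^n, gcd(a,b)=1, and let N(c,n) be the number of pairs in S_n satisfying c^n < R(c)^(ε/(1+ε))·R(ab)^(1/(1+ε)). Suppose that for all n, κ · R(c)^(1-ε) · c^(2n) < (∏_{(a,b)∈S_n} R(c·a·b))^(2/φ(c^n)). Then N(c,n)/(φ(c^n)/2) → 1 as n → ∞. -/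
open Filter

/-- The radical of a natural number: the product of its distinct prime factors. -/
def rad (m : ℕ) : ℕ := ∏ p ∈ m.primeFactors, p

/-- The set of pairs `(a, b)` with `0 < a < b`, `a + b = c ^ n`, `gcd a b = 1`. -/
def S (c n : ℕ) : Finset (ℕ × ℕ) :=
  (Finset.range (c ^ n) ×ˢ Finset.range (c ^ n)).filter
    (fun p => 0 < p.1 ∧ p.1 < p.2 ∧ p.1 + p.2 = c ^ n ∧ Nat.gcd p.1 p.2 = 1)

/-- The number of pairs in `S c n` satisfying the strong abc inequality for `ε`. -/
noncomputable def Ncount (c n : ℕ) (ε : ℝ) : ℕ :=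
  ((S c n).filter (fun p => (c : ℝ) ^ (n : ℝ) <
      (rad c : ℝ) ^ (ε / (1 + ε)) * (rad (p.1 * p.2) : ℝ) ^ (1 / (1 + ε)))).card

lemma rad_pos (m : ℕ) : 0 < rad m :=
  Finset.prod_pos fun p hp => (Nat.prime_of_mem_primeFactors hp).pos

lemma rad_dvd (m : ℕ) : rad m ∣ m := Nat.prod_primeFactors_dvd m

lemma rad_le {m : ℕ} (hm : 0 < m) : rad m ≤ m := Nat.le_of_dvd hm (rad_dvd m)

lemma two_le_rad {m : ℕ} (hm : 2 ≤ m) : 2 ≤ rad m := by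
  have h1 : m.minFac ∈ m.primeFactors := by
    rw [Nat.mem_primeFactors]
    exact ⟨Nat.minFac_prime (by omega), Nat.minFac_dvd m, by omega⟩
  calc 2 ≤ m.minFac := (Nat.minFac_prime (by omega : m ≠ 1)).two_le
    _ ≤ rad m := Finset.single_le_prod'
        (fun p hp => (Nat.prime_of_mem_primeFactors hp).one_le) h1

lemma rad_mul_le {a b : ℕ} (ha : a ≠ 0) (hb : b ≠ 0) : rad (a * b) ≤ rad a * rad b := by
  have h := Nat.primeFactors_mul ha hb
  unfold rad
  rw [h]
  calc ∏ p ∈ a.primeFactors ∪ b.primeFactors, p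
      ≤ (∏ p ∈ a.primeFactors ∪ b.primeFactors, p) * ∏ p ∈ a.primeFactors ∩ b.primeFactors, p := by
        have h1 : 0 < ∏ p ∈ a.primeFactors ∩ b.primeFactors, p :=
          Finset.prod_pos fun p hp => (Nat.prime_of_mem_primeFactors (Finset.mem_inter.1 hp).1).pos
        have h2 : 0 < ∏ p ∈ a.primeFactors ∪ b.primeFactors, p := by
          apply Finset.prod_pos
          intro p hp
          rcases Finset.mem_union.1 hp with h | h
          · exact (Nat.prime_of_mem_primeFactors h).pos
          · exact (Nat.prime_of_mem_primeFactors h).pos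
        nlinarith
    _ = (∏ p ∈ a.primeFactors, p) * ∏ p ∈ b.primeFactors, p := Finset.prod_union_inter

lemma mem_S {c n : ℕ} {p : ℕ × ℕ} : p ∈ S c n ↔
    p.1 < c ^ n ∧ p.2 < c ^ n ∧ 0 < p.1 ∧ p.1 < p.2 ∧ p.1 + p.2 = c ^ n ∧ Nat.gcd p.1 p.2 = 1 := by
  simp [S, Finset.mem_filter, Finset.mem_product, and_assoc]

lemma card_S_eq (c n : ℕ) (hm : 3 ≤ c ^ n) : 2 * (S c n).card = (c ^ n).totient := by
  set m := c ^ n with hmdef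
  have key : ∀ a, a ≤ m → Nat.gcd a m = Nat.gcd a (m - a) := by
    intro a ha
    conv_lhs => rw [show m = (m - a) + a by omega, Nat.gcd_add_self_right]
  have hzero : ∀ a, Nat.gcd a m = 1 → a ≠ 0 := by
    intro a h ha; rw [ha, Nat.gcd_zero_left] at h; omega
  have hmid : ∀ a, Nat.gcd a m = 1 → 2 * a ≠ m := by
    intro a h heq
    have hd : a ∣ m := ⟨2, by omega⟩
    rw [Nat.gcd_eq_left hd] at h
    omega
  set A := (Finset.range m).filter (fun a => Nat.gcd a m = 1 ∧ 2 * a < m) with hA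
  set B := (Finset.range m).filter (fun a => Nat.gcd a m = 1 ∧ m < 2 * a) with hB
  have hSA : (S c n).card = A.card := by
    apply Finset.card_bij (fun p _ => p.1)
    · intro p hp
      rw [mem_S] at hp
      obtain ⟨h1, h2, h3, h4, h5, h6⟩ := hp
      simp only [hA, Finset.mem_filter, Finset.mem_range]
      refine ⟨h1, ?_, by omega⟩
      have : p.2 = m - p.1 := by omega
      rw [key p.1 (by omega), ← this]; exact h6
    · intro p hp q hq hpq
      rw [mem_S] at hp hq
      have : p.2 = m - p.1 := by omega
      have : q.2 = m - q.1 := by omega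
      ext
      · exact hpq
      · omega
    · intro a ha
      simp only [hA, Finset.mem_filter, Finset.mem_range] at ha
      obtain ⟨h1, h2, h3⟩ := ha
      refine ⟨(a, m - a), ?_, rfl⟩
      rw [mem_S]
      have ha0 : a ≠ 0 := hzero a h2
      refine ⟨h1, by omega, by omega, by omega, by omega, ?_⟩
      simp only
      rw [← key a (by omega)]; exact h2
  have hAB : A.card = B.card := by
    apply Finset.card_bij (fun a _ => m - a)
    · intro a ha
      simp only [hA, Finset.mem_filter, Finset.mem_range] at ha
      obtain ⟨h1, h2, h3⟩ := ha
      have ha0 : a ≠ 0 := hzero a h2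
      simp only [hB, Finset.mem_filter, Finset.mem_range]
      refine ⟨by omega, ?_, by omega⟩
      rw [key (m - a) (by omega), show m - (m - a) = a by omega,
        Nat.gcd_comm, ← key a (by omega)]
      exact h2
    · intro a ha b hb hab
      simp only [hA, Finset.mem_filter, Finset.mem_range] at ha hb
      omega
    · intro b hb
      simp only [hB, Finset.mem_filter, Finset.mem_range] at hb
      obtain ⟨h1, h2, h3⟩ := hb
      refine ⟨m - b, ?_, by omega⟩
      simp only [hA, Finset.mem_filter, Finset.mem_range]
      refine ⟨by omega, ?_, by omega⟩
      rw [key (m - b) (by omega), show m - (m - b) = b by omega,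
        Nat.gcd_comm, ← key b (by omega)]
      exact h2
  have htot : (m).totient = A.card + B.card := by
    rw [Nat.totient]
    have : (Finset.range m).filter m.Coprime =
        (Finset.range m).filter (fun a => Nat.gcd a m = 1) := by
      apply Finset.filter_congr
      intro a _
      simp [Nat.Coprime, Nat.gcd_comm]
    rw [this]
    rw [← Finset.card_filter_add_card_filter_not (p := fun a => 2 * a < m)]
    congr 1
    · rw [hA, Finset.filter_filter]
    · rw [hB, Finset.filter_filter]
      apply congrArg Finset.card
      apply Finset.filter_congr
      intro a ha
      simp only [Finset.mem_range] at ha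
      constructor
      · rintro ⟨h1, h2⟩; exact ⟨h1, by have := hmid a h1; omega⟩
      · rintro ⟨h1, h2⟩; exact ⟨h1, by omega⟩
  omega

theorem stmt_6 (c : ℕ) (hc : 2 ≤ c) (ε : ℝ) (hε0 : 0 < ε) (hε1 : ε < 1)
    (κ : ℝ) (hκ : 0 < κ)
    (hGM : ∀ n : ℕ, 0 < n →
      κ * (rad c : ℝ) ^ (1 - ε) * (c : ℝ) ^ (2 * (n : ℝ)) <
        (∏ p ∈ S c n, (rad (c * p.1 * p.2) : ℝ)) ^ (2 / (Nat.totient (c ^ n) : ℝ))) :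
    Tendsto (fun n : ℕ => (Ncount c n ε : ℝ) / ((Nat.totient (c ^ n) : ℝ) / 2))
      atTop (nhds 1) := by
  have hc0 : (0:ℝ) < (c:ℝ) := by positivity
  have hc1 : (1:ℝ) < (c:ℝ) := by exact_mod_cast hc.trans_lt' one_lt_two
  have hrad2 : 2 ≤ rad c := two_le_rad hc
  have hR0 : (0:ℝ) < (rad c : ℝ) := by positivity
  have hR1 : (1:ℝ) < (rad c : ℝ) := by exact_mod_cast hrad2.trans_lt' one_lt_two
  set x := Real.log (rad c : ℝ) with hxdef
  set y := Real.log (c:ℝ) with hydef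
  set k := Real.log κ with hkdef
  have hx : 0 < x := Real.log_pos hR1
  have hy : 0 < y := Real.log_pos hc1
  -- The key per-n inequality
  have key : ∀ n : ℕ, 2 ≤ n →
      (((S c n).filter (fun p => ¬ ((c : ℝ) ^ (n : ℝ) <
        (rad c : ℝ) ^ (ε / (1 + ε)) * (rad (p.1 * p.2) : ℝ) ^ (1 / (1 + ε))))).card : ℝ)
        * ((n:ℝ) * ((1 - ε) * y)) < ((S c n).card : ℝ) * (ε * x - k) := by
    intro n hn
    have hm4 : 4 ≤ c ^ n := by
      calc 4 = 2 ^ 2 := rfl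
        _ ≤ c ^ 2 := Nat.pow_le_pow_left hc 2
        _ ≤ c ^ n := Nat.pow_le_pow_right (by omega) hn
    have hT2 := card_S_eq c n (by omega)
    have hTpos : 0 < (S c n).card := by
      have := Nat.totient_pos.2 (show 0 < c ^ n by omega)
      omega
    set t := ((S c n).card : ℝ) with htdef
    have ht : (0:ℝ) < t := by rw [htdef]; exact_mod_cast hTpos
    -- pair facts
    have hfacts : ∀ p ∈ S c n, p.1 ≠ 0 ∧ p.2 ≠ 0 ∧ p.1 < c ^ n ∧ p.2 < c ^ n := by
      intro p hp
      rw [mem_S] at hp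
      exact ⟨by omega, by omega, hp.1, hp.2.1⟩
    have hterm_pos : ∀ p ∈ S c n, (0:ℝ) < (rad (c * p.1 * p.2) : ℝ) := by
      intro p _
      exact_mod_cast rad_pos _
    have hPpos : (0:ℝ) < ∏ p ∈ S c n, (rad (c * p.1 * p.2) : ℝ) :=
      Finset.prod_pos hterm_pos
    -- log of the GM hypothesis
    have hGMn := hGM n (by omega)
    have hlog1 := Real.log_lt_log (by positivity) hGMn
    rw [Real.log_mul (by positivity) (by positivity),
        Real.log_mul (ne_of_gt hκ) (by positivity),
        Real.log_rpow hR0, Real.log_rpow hc0, Real.log_rpow hPpos,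
        Real.log_prod (fun p hp => ne_of_gt (hterm_pos p hp))] at hlog1
    -- totient cast
    have htotc : ((c ^ n).totient : ℝ) = 2 * t := by
      rw [htdef]
      exact_mod_cast hT2.symm
    -- the "good" universal bound
    have hgood : ∀ p ∈ S c n, Real.log (rad (c * p.1 * p.2) : ℝ) ≤ x + ((n:ℝ) * y + (n:ℝ) * y) := by
      intro p hp
      obtain ⟨h1, h2, h3, h4⟩ := hfacts p hp
      have hnat : rad (c * p.1 * p.2) ≤ rad c * (c ^ n * c ^ n) := by
        calc rad (c * p.1 * p.2) = rad (c * (p.1 * p.2)) := by rw [mul_assoc]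
          _ ≤ rad c * rad (p.1 * p.2) := rad_mul_le (by omega) (mul_ne_zero h1 h2)
          _ ≤ rad c * (c ^ n * c ^ n) := by
              have hr : rad (p.1 * p.2) ≤ p.1 * p.2 :=
                rad_le (Nat.pos_of_ne_zero (mul_ne_zero h1 h2))
              have : p.1 * p.2 ≤ c ^ n * c ^ n := Nat.mul_le_mul h3.le h4.le
              exact Nat.mul_le_mul_left _ (hr.trans this)
      have hlog := Real.log_le_log (by exact_mod_cast rad_pos _)
        (by exact_mod_cast hnat : ((rad (c * p.1 * p.2) : ℝ)) ≤ ((rad c * (c ^ n * c ^ n) : ℕ) : ℝ))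
      have hcast : (((rad c * (c ^ n * c ^ n) : ℕ)) : ℝ) = (rad c : ℝ) * ((c:ℝ) ^ n * (c:ℝ) ^ n) := by
        push_cast; ring
      rw [hcast, Real.log_mul (by positivity) (by positivity),
        Real.log_mul (by positivity) (by positivity), Real.log_pow] at hlog
      exact hlog
    -- the "bad" bound
    have hbad : ∀ p ∈ S c n,
        ¬ ((c : ℝ) ^ (n : ℝ) < (rad c : ℝ) ^ (ε / (1 + ε)) * (rad (p.1 * p.2) : ℝ) ^ (1 / (1 + ε))) →
        Real.log (rad (c * p.1 * p.2) : ℝ) ≤ x + ((1 + ε) * ((n:ℝ) * y) - ε * x) := by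
      intro p hp hnot
      obtain ⟨h1, h2, h3, h4⟩ := hfacts p hp
      have hab0 : (0:ℝ) < (rad (p.1 * p.2) : ℝ) := by
        have := rad_pos (p.1 * p.2); positivity
      have hle2 : (rad c : ℝ) ^ (ε / (1 + ε)) * (rad (p.1 * p.2) : ℝ) ^ (1 / (1 + ε)) ≤
          (c : ℝ) ^ (n : ℝ) := not_lt.1 hnot
      have hlog2 := Real.log_le_log (by positivity) hle2
      rw [Real.log_mul (by positivity) (by positivity), Real.log_rpow hR0,
        Real.log_rpow hab0, Real.log_rpow hc0] at hlog2
      have h1e : (0:ℝ) < 1 + ε := by linarith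
      have hmul := mul_le_mul_of_nonneg_left hlog2 h1e.le
      have hexp : (1 + ε) * (ε / (1 + ε) * x + 1 / (1 + ε) * Real.log (rad (p.1 * p.2) : ℝ))
          = ε * x + Real.log (rad (p.1 * p.2) : ℝ) := by
        field_simp
      rw [hexp] at hmul
      -- now: ε * x + log rad(ab) ≤ (1+ε) * (n * y)
      have hsplit : Real.log (rad (c * p.1 * p.2) : ℝ) ≤ x + Real.log (rad (p.1 * p.2) : ℝ) := by
        have hnat : rad (c * p.1 * p.2) ≤ rad c * rad (p.1 * p.2) := by
          rw [mul_assoc]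
          exact rad_mul_le (by omega) (mul_ne_zero h1 h2)
        have hlog3 := Real.log_le_log (by exact_mod_cast rad_pos _)
          (by exact_mod_cast hnat : ((rad (c * p.1 * p.2) : ℝ)) ≤ ((rad c * rad (p.1 * p.2) : ℕ) : ℝ))
        have hcast : (((rad c * rad (p.1 * p.2) : ℕ)) : ℝ) = (rad c : ℝ) * (rad (p.1 * p.2) : ℝ) := by
          push_cast; ring
        rw [hcast, Real.log_mul (by positivity) (by positivity)] at hlog3
        exact hlog3
      linarith
    -- split the sum
    set P := fun p : ℕ × ℕ => (c : ℝ) ^ (n : ℝ) <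
        (rad c : ℝ) ^ (ε / (1 + ε)) * (rad (p.1 * p.2) : ℝ) ^ (1 / (1 + ε)) with hPdef
    have hsplitsum : ∑ p ∈ (S c n).filter P, Real.log (rad (c * p.1 * p.2) : ℝ)
        + ∑ p ∈ (S c n).filter (fun p => ¬ P p), Real.log (rad (c * p.1 * p.2) : ℝ)
        = ∑ p ∈ S c n, Real.log (rad (c * p.1 * p.2) : ℝ) :=
      Finset.sum_filter_add_sum_filter_not _ _ _
    set G := (((S c n).filter P).card : ℝ) with hGdef
    set B := ((((S c n).filter (fun p => ¬ P p)).card : ℝ)) with hBdef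
    have hGB : G + B = t := by
      rw [hGdef, hBdef, htdef]
      exact_mod_cast Finset.card_filter_add_card_filter_not (s := S c n) P
    have hsum1 : ∑ p ∈ (S c n).filter P, Real.log (rad (c * p.1 * p.2) : ℝ)
        ≤ G * (x + ((n:ℝ) * y + (n:ℝ) * y)) := by
      rw [hGdef]
      have := Finset.sum_le_card_nsmul ((S c n).filter P)
        (fun p => Real.log (rad (c * p.1 * p.2) : ℝ)) (x + ((n:ℝ) * y + (n:ℝ) * y))
        (fun p hp => hgood p (Finset.mem_of_mem_filter p hp))
      simpa only [nsmul_eq_mul] using this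
    have hsum2 : ∑ p ∈ (S c n).filter (fun p => ¬ P p), Real.log (rad (c * p.1 * p.2) : ℝ)
        ≤ B * (x + ((1 + ε) * ((n:ℝ) * y) - ε * x)) := by
      rw [hBdef]
      have := Finset.sum_le_card_nsmul ((S c n).filter (fun p => ¬ P p))
        (fun p => Real.log (rad (c * p.1 * p.2) : ℝ)) (x + ((1 + ε) * ((n:ℝ) * y) - ε * x))
        (fun p hp => by
          have hmem := Finset.mem_filter.1 hp
          exact hbad p hmem.1 hmem.2)
      simpa only [nsmul_eq_mul] using this
    -- combine
    rw [htotc] at hlog1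
    have h2t : 2 / (2 * t) = 1 / t := by field_simp
    rw [h2t, one_div, inv_mul_eq_div] at hlog1
    have hmain : t * (k + (1 - ε) * x + 2 * (n:ℝ) * y)
        < ∑ p ∈ S c n, Real.log (rad (c * p.1 * p.2) : ℝ) := by
      rw [mul_comm]
      exact (lt_div_iff₀ ht).1 hlog1
    have hGeq : G = t - B := by linarith
    rw [hGeq] at hsum1
    have hB0 : (0:ℝ) ≤ B := by rw [hBdef]; positivity
    have hBex : (0:ℝ) ≤ B * (ε * x) := by positivity
    linarith [hsum1, hsum2, hmain, hBex]
  -- now the limit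
  set C := (ε * x - k) / ((1 - ε) * y) with hCdef
  have hd : (0:ℝ) < (1 - ε) * y := by
    have : (0:ℝ) < 1 - ε := by linarith
    positivity
  apply tendsto_of_tendsto_of_tendsto_of_le_of_le' (g := fun n : ℕ => 1 - C / (n:ℝ))
    (h := fun _ : ℕ => (1:ℝ))
  · have h0 : Tendsto (fun n : ℕ => C / (n:ℝ)) atTop (nhds 0) :=
      Tendsto.div_atTop tendsto_const_nhds tendsto_natCast_atTop_atTop
    have := (tendsto_const_nhds (x := (1:ℝ)) (f := atTop)).sub h0
    simpa using this
  · exact tendsto_const_nhds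
  · filter_upwards [eventually_ge_atTop 2] with n hn
    have hkey := key n hn
    have hm4 : 4 ≤ c ^ n := by
      calc 4 = 2 ^ 2 := rfl
        _ ≤ c ^ 2 := Nat.pow_le_pow_left hc 2
        _ ≤ c ^ n := Nat.pow_le_pow_right (by omega) hn
    have hT2 := card_S_eq c n (by omega)
    have hTpos : 0 < (S c n).card := by
      have := Nat.totient_pos.2 (show 0 < c ^ n by omega)
      omega
    set t := ((S c n).card : ℝ) with htdef
    have ht : (0:ℝ) < t := by rw [htdef]; exact_mod_cast hTpos
    have hn0 : (0:ℝ) < (n:ℝ) := by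
      have : 0 < n := by omega
      exact_mod_cast this
    set B := ((((S c n).filter (fun p => ¬ ((c : ℝ) ^ (n : ℝ) <
        (rad c : ℝ) ^ (ε / (1 + ε)) * (rad (p.1 * p.2) : ℝ) ^ (1 / (1 + ε))))).card : ℝ)) with hBdef
    have hGB : (Ncount c n ε : ℝ) + B = t := by
      rw [hBdef, htdef, Ncount]
      exact_mod_cast Finset.card_filter_add_card_filter_not
        (s := S c n) (fun p => (c : ℝ) ^ (n : ℝ) <
          (rad c : ℝ) ^ (ε / (1 + ε)) * (rad (p.1 * p.2) : ℝ) ^ (1 / (1 + ε)))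
    have htotc : ((c ^ n).totient : ℝ) / 2 = t := by
      have : ((c ^ n).totient : ℝ) = 2 * t := by rw [htdef]; exact_mod_cast hT2.symm
      rw [this]; ring
    rw [htotc]
    -- from key: B * n * ((1-ε)*y) < t * (ε*x - k), so B * n ≤ t * C
    have hBn : B * (n:ℝ) ≤ t * C := by
      have h1 : B * (n:ℝ) * ((1 - ε) * y) ≤ t * C * ((1 - ε) * y) := by
        have hCd : C * ((1 - ε) * y) = ε * x - k := by
          rw [hCdef]; exact div_mul_cancel₀ _ (ne_of_gt hd)
        calc B * (n:ℝ) * ((1 - ε) * y) = B * ((n:ℝ) * ((1 - ε) * y)) := by ring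
          _ ≤ t * (ε * x - k) := hkey.le
          _ = t * C * ((1 - ε) * y) := by rw [mul_assoc, hCd]
      exact le_of_mul_le_mul_right h1 hd
    have hBt : B / t ≤ C / (n:ℝ) := by
      rw [div_le_div_iff₀ ht hn0]
      linarith
    have hNc : (Ncount c n ε : ℝ) = t - B := by linarith
    rw [hNc, sub_div, div_self (ne_of_gt ht)]
    linarith
  · filter_upwards [eventually_ge_atTop 2] with n hn
    have hm4 : 4 ≤ c ^ n := by
      calc 4 = 2 ^ 2 := rfl
        _ ≤ c ^ 2 := Nat.pow_le_pow_left hc 2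
        _ ≤ c ^ n := Nat.pow_le_pow_right (by omega) hn
    have hT2 := card_S_eq c n (by omega)
    have hTpos : 0 < (S c n).card := by
      have := Nat.totient_pos.2 (show 0 < c ^ n by omega)
      omega
    have ht : (0:ℝ) < ((S c n).card : ℝ) := by exact_mod_cast hTpos
    have htotc : ((c ^ n).totient : ℝ) / 2 = ((S c n).card : ℝ) := by
      have : ((c ^ n).totient : ℝ) = 2 * ((S c n).card : ℝ) := by exact_mod_cast hT2.symm
      rw [this]; ring
    rw [htotc, div_le_one ht]
    have : Ncount c n ε ≤ (S c n).card := Finset.card_filter_le _ _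
    exact_mod_cast this
end

section
/- Let c ≥ 2, n ≥ 1, 0 < ε < 1, and let x_1, …, x_m be positive reals (m ≥ 1) such that exactly N of them exceed R(c)^(1-ε)·c^(n(1+ε)), each of those N is less than R(c)·c^(2n), and the remaining m - N are each at most R(c)^(1-ε)·c^(n(1+ε)). If κ·R(c)^(1-ε)·c^(2n) < (∏ x_i)^(1/m) for some κ > 0, then κ·c^(n(1-ε)) < (R(c)^ε · c^(n(1-ε)))^(N/m). -/
theorem stmt_8 (c n : ℕ) (hc : 2 ≤ c) (hn : 1 ≤ n) (ε : ℝ) (hε0 : 0 < ε) (hε1 : ε < 1)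
    (m : ℕ) (hm : 1 ≤ m) (x : Fin m → ℝ) (hx : ∀ i, 0 < x i)
    (N : ℕ) (A : Finset (Fin m)) (hA : A.card = N)
    (hbig : ∀ i ∈ A, (rad c : ℝ) ^ (1 - ε) * (c : ℝ) ^ ((n : ℝ) * (1 + ε)) < x i ∧
      x i < (rad c : ℝ) * (c : ℝ) ^ (2 * (n : ℝ)))
    (hsmall : ∀ i ∉ A, x i ≤ (rad c : ℝ) ^ (1 - ε) * (c : ℝ) ^ ((n : ℝ) * (1 + ε)))
    (κ : ℝ) (hκ : 0 < κ)
    (hGM : κ * (rad c : ℝ) ^ (1 - ε) * (c : ℝ) ^ (2 * (n : ℝ)) <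
      (∏ i, x i) ^ (1 / (m : ℝ))) :
    κ * (c : ℝ) ^ ((n : ℝ) * (1 - ε)) <
      ((rad c : ℝ) ^ ε * (c : ℝ) ^ ((n : ℝ) * (1 - ε))) ^ ((N : ℝ) / (m : ℝ)) := by
  have hc0 : (0 : ℝ) < c := by positivity
  have hRnat : 0 < rad c := Finset.prod_pos fun p hp => (Nat.prime_of_mem_primeFactors hp).pos
  have hR0 : (0 : ℝ) < (rad c : ℝ) := by exact_mod_cast hRnat
  have hm0 : (0 : ℝ) < (m : ℝ) := by exact_mod_cast hm
  have hNm : N ≤ m := by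
    have := Finset.card_le_card (Finset.subset_univ A)
    simpa [hA] using this
  set R : ℝ := (rad c : ℝ)
  set B : ℝ := R * (c : ℝ) ^ (2 * (n : ℝ)) with hBdef
  set S : ℝ := R ^ (1 - ε) * (c : ℝ) ^ ((n : ℝ) * (1 + ε)) with hSdef
  have hB0 : 0 < B := by positivity
  have hS0 : 0 < S := by positivity
  have hP0 : 0 < ∏ i, x i := Finset.prod_pos fun i _ => hx i
  -- product bound
  have hprod : ∏ i, x i ≤ B ^ N * S ^ (m - N) := by
    rw [← Finset.prod_mul_prod_compl A]
    have h1 : ∏ i ∈ A, x i ≤ B ^ N := by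
      rw [← hA]
      calc ∏ i ∈ A, x i ≤ ∏ _i ∈ A, B :=
              Finset.prod_le_prod (fun i _ => le_of_lt (hx i))
                (fun i hi => le_of_lt (hbig i hi).2)
        _ = B ^ A.card := Finset.prod_const B
    have h2 : ∏ i ∈ Aᶜ, x i ≤ S ^ (m - N) := by
      have : Aᶜ.card = m - N := by
        rw [Finset.card_compl, hA]; simp
      rw [← this]
      calc ∏ i ∈ Aᶜ, x i ≤ ∏ _i ∈ Aᶜ, S :=
              Finset.prod_le_prod (fun i _ => le_of_lt (hx i))
                (fun i hi => hsmall i (Finset.mem_compl.mp hi))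
        _ = S ^ Aᶜ.card := Finset.prod_const S
    have hA0 : 0 ≤ ∏ i ∈ A, x i := le_of_lt (Finset.prod_pos fun i _ => hx i)
    have hS0' : (0:ℝ) ≤ S ^ (m - N) := by positivity
    exact mul_le_mul h1 h2 (le_of_lt (Finset.prod_pos fun i _ => hx i)) (by positivity)
  -- take logs
  have hlogGM : Real.log κ + (1 - ε) * Real.log R + 2 * (n : ℝ) * Real.log c <
      (1 / (m : ℝ)) * Real.log (∏ i, x i) := by
    have := (Real.log_lt_log_iff (by positivity) (Real.rpow_pos_of_pos hP0 _)).mpr hGM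
    rwa [Real.log_rpow hP0, Real.log_mul (by positivity) (by positivity),
      Real.log_mul (ne_of_gt hκ) (by positivity), Real.log_rpow hR0,
      Real.log_rpow hc0] at this
  have hlogprod : Real.log (∏ i, x i) ≤
      (N : ℝ) * Real.log B + ((m : ℝ) - (N : ℝ)) * Real.log S := by
    have := Real.log_le_log hP0 hprod
    rwa [Real.log_mul (by positivity) (by positivity), Real.log_pow, Real.log_pow,
      Nat.cast_sub hNm] at this
  have hlogB : Real.log B = Real.log R + 2 * (n : ℝ) * Real.log c := by
    rw [hBdef, Real.log_mul (ne_of_gt hR0) (by positivity), Real.log_rpow hc0]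
  have hlogS : Real.log S = (1 - ε) * Real.log R + (n : ℝ) * (1 + ε) * Real.log c := by
    rw [hSdef, Real.log_mul (by positivity) (by positivity), Real.log_rpow hR0,
      Real.log_rpow hc0]
  -- conclude via logs
  have hgoal_log : Real.log (κ * (c : ℝ) ^ ((n : ℝ) * (1 - ε))) <
      Real.log (((rad c : ℝ) ^ ε * (c : ℝ) ^ ((n : ℝ) * (1 - ε))) ^ ((N : ℝ) / (m : ℝ))) := by
    rw [Real.log_rpow (by positivity), Real.log_mul (ne_of_gt hκ) (by positivity),
      Real.log_mul (by positivity) (by positivity), Real.log_rpow hc0,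
      Real.log_rpow hR0]
    have key : (1 / (m : ℝ)) * Real.log (∏ i, x i) ≤
        (1 / (m : ℝ)) * ((N : ℝ) * Real.log B + ((m : ℝ) - (N : ℝ)) * Real.log S) :=
      mul_le_mul_of_nonneg_left hlogprod (by positivity)
    have h := lt_of_lt_of_le hlogGM key
    rw [hlogB, hlogS] at h
    rw [div_mul_eq_mul_div, lt_div_iff₀ hm0]
    rw [one_div_mul_eq_div, lt_div_iff₀ hm0] at h
    nlinarith [h]
  have := (Real.log_lt_log_iff (by positivity) (by positivity)).mp hgoal_log
  exact this
end
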